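/- Suppose wing numbers partition the edges of a bipartite graph G into sets E_1,...,E_P where E_i = {e : θ(i) ≤ θ_e < θ(i+1)} for thresholds θ(1) < θ(2) < ... < θ(P+1). Then for each i, the wing numbers of edges in E_i are completely determined by the subgraph structure restricted to butterflies whose edges all lie in E_i ∪ E_{i+1} ∪ ... ∪ E_P, together with, for each e ∈ E_i, the count of butterflies of G containing e with all edges in ∪_{j≥i} E_j. -/

import Mathlib

open Finset

attribute [local instance] Classical.propDecidable

variable {α β : Type*} [Fintype α] [Fintype β] [DecidableEq α] [DecidableEq β]

/-- `B = (B.1, B.2)` is a butterfly (K_{2,2} subgraph) of the bipartite graph with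
edge set `E`: two vertices on each side, with all four connecting edges present. -/
def IsBfly (E : Finset (α × β)) (B : Finset α × Finset β) : Prop :=
  B.1.card = 2 ∧ B.2.card = 2 ∧ ∀ u ∈ B.1, ∀ v ∈ B.2, (u, v) ∈ E

/-- The set of butterflies of the bipartite graph with edge set `E`. -/
noncomputable def bflies (E : Finset (α × β)) : Finset (Finset α × Finset β) :=
  Finset.univ.filter (fun B => IsBfly E B)

/-- The edge `e` is one of the four edges of the butterfly `B`. -/
def edgeInB (e : α × β) (B : Finset α × Finset β) : Prop :=
  e.1 ∈ B.1 ∧ e.2 ∈ B.2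

/-- Number of butterflies of `E` containing the edge `e` (the support of `e`). -/
noncomputable def edgeBflyCount (E : Finset (α × β)) (e : α × β) : ℕ :=
  ((bflies E).filter (fun B => edgeInB e B)).card

/-- The wing number of an edge `e`: the maximum `k` such that `e` belongs to an edge
subset `H ⊆ E` in which every edge participates in at least `k` butterflies within `H`. -/
noncomputable def wingNumber (E : Finset (α × β)) (e : α × β) : ℕ :=
  sSup {k | ∃ H ⊆ E, e ∈ H ∧ ∀ e' ∈ H, k ≤ edgeBflyCount H e'}

lemma bflies_mono {E E' : Finset (α × β)} (h : E' ⊆ E) : bflies E' ⊆ bflies E := by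
  intro B hB
  have hB : IsBfly E' B := (mem_filter.1 hB).2
  exact mem_filter.2 ⟨mem_univ _, hB.1, hB.2.1, fun u hu v hv => h (hB.2.2 u hu v hv)⟩

lemma wing_bdd (E : Finset (α × β)) (e : α × β) :
    BddAbove {k | ∃ H ⊆ E, e ∈ H ∧ ∀ e' ∈ H, k ≤ edgeBflyCount H e'} := by
  refine ⟨(bflies E).card, ?_⟩
  rintro k ⟨H, hHE, heH, hk⟩
  calc k ≤ edgeBflyCount H e := hk e heH
    _ ≤ (bflies H).card := card_le_card (filter_subset _ _)
    _ ≤ (bflies E).card := card_le_card (bflies_mono hHE)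

/-- Independence of partitions: given strictly increasing thresholds `θ 1 < ⋯ < θ (P+1)`
partitioning edges by wing number, for any edge `e` with `θ i ≤ wingNumber E e`, the wing
number of `e` computed in the restriction to the edges of wing number at least `θ i`
(i.e. to butterflies all of whose edges lie in `⋃_{j ≥ i} E_j`) equals its wing number
in the full graph. -/
theorem partition_independence (E : Finset (α × β)) (P : ℕ) (θ : ℕ → ℕ)
    (hmono : StrictMonoOn θ (Set.Icc 1 (P + 1))) (i : ℕ) (hi1 : 1 ≤ i) (hiP : i ≤ P)
    (e : α × β) (he : e ∈ E) (hθe : θ i ≤ wingNumber E e) :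
    wingNumber (E.filter (fun e' => θ i ≤ wingNumber E e')) e = wingNumber E e := by
  set E' := E.filter (fun e' => θ i ≤ wingNumber E e') with hE'
  have heE' : e ∈ E' := mem_filter.2 ⟨he, hθe⟩
  have hsub : E' ⊆ E := filter_subset _ _
  have hle : wingNumber E' e ≤ wingNumber E e := by
    unfold wingNumber
    refine csSup_le_csSup (wing_bdd E e) ⟨0, {e}, by simp [heE'], by simp, fun e' _ => Nat.zero_le _⟩ ?_
    rintro k ⟨H, hH, h1, h2⟩
    exact ⟨H, hH.trans hsub, h1, h2⟩
  refine le_antisymm hle ?_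
  have hne : ({k | ∃ H ⊆ E, e ∈ H ∧ ∀ e' ∈ H, k ≤ edgeBflyCount H e'} : Set ℕ).Nonempty :=
    ⟨0, {e}, by simpa, by simp, fun e' _ => Nat.zero_le _⟩
  have hmem : wingNumber E e ∈ {k | ∃ H ⊆ E, e ∈ H ∧ ∀ e' ∈ H, k ≤ edgeBflyCount H e'} :=
    Nat.sSup_mem hne (wing_bdd E e)
  obtain ⟨H, hHE, heH, hk⟩ := hmem
  have hHsub : H ⊆ E' := by
    intro e' he'
    refine mem_filter.2 ⟨hHE he', hθe.trans ?_⟩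
    exact le_csSup (wing_bdd E e') ⟨H, hHE, he', hk⟩
  exact le_csSup (wing_bdd E' e) ⟨H, hHsub, heH, hk⟩
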